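/- Let 0<q<1. The function f(x) = (Γ_q(x+1))^{1/x} is strictly log-concave and strictly increasing on (0,∞); that is, x ↦ (1/x)·log Γ_q(x+1) is strictly concave and strictly increasing on (0,∞). -/

import Mathlib

open Real

set_option maxHeartbeats 1000000

/-- The q-digamma function: ψ_q(x) = -log(1-q) + (log q)·∑_{n=1}^∞ q^{nx}/(1-q^n). -/
noncomputable def qDigamma (q x : ℝ) : ℝ :=
  -Real.log (1 - q) + Real.log q * ∑' n : ℕ, q ^ (((n : ℝ) + 1) * x) / (1 - q ^ (n + 1))

/-- The q-gamma function: Γ_q(x) = (q;q)_∞/(q^x;q)_∞ · (1-q)^{1-x}. -/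
noncomputable def qGamma (q x : ℝ) : ℝ :=
  ((∏' i : ℕ, (1 - q ^ (i + 1))) / ∏' i : ℕ, (1 - q ^ (x + (i : ℝ)))) * (1 - q) ^ (1 - x)

/-- The q-bracket: [x]_q = (1-q^x)/(1-q). -/
noncomputable def qBracket (q x : ℝ) : ℝ := (1 - q ^ x) / (1 - q)

/-! ### Auxiliary definitions -/

noncomputable def Eb (b x : ℝ) : ℝ := (Real.exp (-(b*x)) - 1)/x
noncomputable def Eb1 (b x : ℝ) : ℝ :=
  (Real.exp (-(b*x)) * -b * x - (Real.exp (-(b*x)) - 1)) / x ^ 2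
noncomputable def Dq (q y : ℝ) : ℝ :=
  ∑' n : ℕ, q ^ (y * ((n:ℝ)+1)) / (((n:ℝ)+1) * (1 - q ^ (n+1)))
noncomputable def cq (q : ℝ) (n : ℕ) : ℝ := q ^ (n+1) / (((n:ℝ)+1) * (1 - q ^ (n+1)))
noncomputable def bq (q : ℝ) (n : ℕ) : ℝ := ((n:ℝ)+1) * (-Real.log q)

section Aux

open Filter Set

/-! ### Elementary derivative computations for `Eb` -/

lemma Eb_hasDerivAt (b : ℝ) {x : ℝ} (hx : x ≠ 0) :
    HasDerivAt (Eb b) (Eb1 b x) x := by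
  have h0 : HasDerivAt (fun y : ℝ => -(b*y)) (-b) x := by
    simpa [Pi.neg_def] using ((hasDerivAt_id x).const_mul b).neg
  have h1 : HasDerivAt (fun y : ℝ => Real.exp (-(b*y)) - 1) (Real.exp (-(b*x)) * -b) x :=
    ((Real.hasDerivAt_exp _).comp x h0).sub_const 1
  have := h1.div (hasDerivAt_id x) hx
  show HasDerivAt (fun y => (Real.exp (-(b*y)) - 1)/y) (Eb1 b x) x
  simpa [Eb, Eb1, Pi.div_def] using this

lemma Eb1_hasDerivAt (b : ℝ) {x : ℝ} (hx : x ≠ 0) :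
    HasDerivAt (Eb1 b) ((Real.exp (-(b*x)) * (b^2*x^2 + 2*b*x + 2) - 2)/x^3) x := by
  have h0 : HasDerivAt (fun y : ℝ => -(b*y)) (-b) x := by
    simpa [Pi.neg_def] using ((hasDerivAt_id x).const_mul b).neg
  have he : HasDerivAt (fun y : ℝ => Real.exp (-(b*y))) (Real.exp (-(b*x)) * -b) x :=
    (Real.hasDerivAt_exp _).comp x h0
  have hN : HasDerivAt (fun y : ℝ => Real.exp (-(b*y)) * -b * y - (Real.exp (-(b*y)) - 1))
      (b^2 * x * Real.exp (-(b*x))) x := by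
    have h2 : HasDerivAt (fun y : ℝ => Real.exp (-(b*y)) * -b * y)
        ((Real.exp (-(b*x)) * -b * -b) * x + Real.exp (-(b*x)) * -b) x := by
      simpa [Pi.mul_def] using ((he.mul_const (-b)).mul (hasDerivAt_id x))
    have h3 : HasDerivAt (fun y : ℝ => Real.exp (-(b*y)) * -b * y - (Real.exp (-(b*y)) - 1)) _ x :=
      h2.sub (he.sub_const 1)
    convert h3 using 1; ring
  have hD : HasDerivAt (fun y : ℝ => y ^ 2) (2 * x) x := by
    simpa [mul_comm] using (hasDerivAt_pow 2 x)
  have := hN.div hD (pow_ne_zero 2 hx)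
  have hEq : (b^2 * x * Real.exp (-(b*x)) * x ^ 2 -
      (Real.exp (-(b*x)) * -b * x - (Real.exp (-(b*x)) - 1)) * (2*x)) / (x ^ 2) ^ 2
      = (Real.exp (-(b*x)) * (b^2*x^2 + 2*b*x + 2) - 2)/x^3 := by
    field_simp
    ring
  exact hEq ▸ this

lemma aux_exp_ineq1 {u : ℝ} (hu : 0 < u) : Real.exp (-u) * (1 + u) < 1 := by
  have h := Real.add_one_lt_exp (ne_of_gt hu)
  have h2 : Real.exp (-u) * Real.exp u = 1 := by rw [← Real.exp_add]; simp
  nlinarith [Real.exp_pos (-u), Real.exp_pos u]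

lemma aux_exp_ineq2 {u : ℝ} (hu : 0 < u) : Real.exp (-u) * (u^2 + 2*u + 2) < 2 := by
  have hs := Real.sum_le_exp_of_nonneg hu.le 4
  have hs' : 1 + u + u^2/2 + u^3/6 ≤ Real.exp u := by
    simp [Finset.sum_range_succ, Nat.factorial] at hs
    linarith
  have h2 : Real.exp (-u) * Real.exp u = 1 := by rw [← Real.exp_add]; simp
  nlinarith [Real.exp_pos (-u), Real.exp_pos u, pow_pos hu 3]

lemma Eb_continuousOn (b : ℝ) : ContinuousOn (Eb b) (Ioi 0) := by
  apply ContinuousOn.div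
  · fun_prop
  · fun_prop
  · exact fun x hx => ne_of_gt hx

lemma Eb_strictMonoOn {b : ℝ} (hb : 0 < b) : StrictMonoOn (Eb b) (Ioi 0) := by
  apply strictMonoOn_of_deriv_pos (convex_Ioi 0) (Eb_continuousOn b)
  intro x hx
  rw [interior_Ioi] at hx
  have hx0 : (0:ℝ) < x := hx
  rw [(Eb_hasDerivAt b (ne_of_gt hx)).deriv]
  have h1 := aux_exp_ineq1 (mul_pos hb hx)
  rw [Eb1]
  apply div_pos _ (by positivity)
  nlinarith [Real.exp_pos (-(b*x))]

lemma Eb_strictConcaveOn {b : ℝ} (hb : 0 < b) : StrictConcaveOn ℝ (Ioi 0) (Eb b) := by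
  apply strictConcaveOn_of_deriv2_neg (convex_Ioi 0) (Eb_continuousOn b)
  intro x hx
  rw [interior_Ioi] at hx
  have hx0 : (0:ℝ) < x := hx
  have hev : deriv (Eb b) =ᶠ[nhds x] Eb1 b := by
    filter_upwards [isOpen_Ioi.mem_nhds hx] with y hy
    exact (Eb_hasDerivAt b (ne_of_gt hy)).deriv
  have : deriv (deriv (Eb b)) x = deriv (Eb1 b) x := hev.deriv_eq
  simp only [Function.iterate_succ, Function.iterate_zero, Function.comp_apply, Function.id_def]
  rw [this, (Eb1_hasDerivAt b (ne_of_gt hx)).deriv]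
  apply div_neg_of_neg_of_pos _ (by positivity)
  have h2 := aux_exp_ineq2 (mul_pos hb hx)
  nlinarith [Real.exp_pos (-(b*x))]

/-! ### The series expansion of `log (qGamma q (x+1))` -/

variable {q : ℝ}

lemma qrpow_pos (hq0 : 0 < q) (t : ℝ) : 0 < q ^ t := Real.rpow_pos_of_pos hq0 t

lemma qrpow_lt_one (hq0 : 0 < q) (hq1 : q < 1) {t : ℝ} (ht : 0 < t) : q ^ t < 1 :=
  Real.rpow_lt_one hq0.le hq1 ht

lemma hasSum_log_qpow (hq0 : 0 < q) (hq1 : q < 1) {t : ℝ} (ht : 0 < t) :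
    HasSum (fun n : ℕ => q ^ (t * ((n:ℝ)+1)) / ((n:ℝ)+1)) (-Real.log (1 - q ^ t)) := by
  have habs : |q ^ t| < 1 := by
    rw [abs_of_pos (qrpow_pos hq0 t)]; exact qrpow_lt_one hq0 hq1 ht
  have h := Real.hasSum_pow_div_log_of_abs_lt_one habs
  refine HasSum.congr_fun h fun n => ?_
  congr 1
  rw [← Real.rpow_natCast (q ^ t) (n+1), ← Real.rpow_mul hq0.le]
  push_cast
  ring_nf

lemma q_pow_succ_lt_one (hq0 : 0 < q) (hq1 : q < 1) (n : ℕ) : q ^ (n+1) < 1 :=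
  pow_lt_one₀ hq0.le hq1 (Nat.succ_ne_zero n)

lemma one_sub_q_pow_pos (hq0 : 0 < q) (hq1 : q < 1) (n : ℕ) : 0 < 1 - q ^ (n+1) :=
  sub_pos.2 (q_pow_succ_lt_one hq0 hq1 n)

lemma one_sub_q_le (hq0 : 0 < q) (hq1 : q < 1) (n : ℕ) : 1 - q ≤ 1 - q ^ (n+1) := by
  have : q ^ (n+1) ≤ q := by
    calc q ^ (n+1) ≤ q ^ 1 :=
      pow_le_pow_of_le_one hq0.le hq1.le (Nat.one_le_iff_ne_zero.2 (Nat.succ_ne_zero n))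
    _ = q := pow_one q
  linarith

lemma summable_D (hq0 : 0 < q) (hq1 : q < 1) {y : ℝ} (hy : 0 < y) :
    Summable (fun n : ℕ => q ^ (y * ((n:ℝ)+1)) / (((n:ℝ)+1) * (1 - q ^ (n+1)))) := by
  have h1q : 0 < 1 - q := by linarith
  apply Summable.of_nonneg_of_le
  · intro n
    exact div_nonneg (qrpow_pos hq0 _).le
      (mul_pos (by positivity) (one_sub_q_pow_pos hq0 hq1 n)).le
  · intro n
    show q ^ (y * ((n:ℝ)+1)) / (((n:ℝ)+1) * (1 - q ^ (n+1))) ≤ (q ^ y * (1-q)⁻¹) * (q ^ y) ^ n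
    have hnum : q ^ (y * ((n:ℝ)+1)) = q ^ y * (q ^ y) ^ n := by
      rw [← Real.rpow_natCast (q ^ y) n, ← Real.rpow_mul hq0.le, ← Real.rpow_add hq0]
      ring_nf
    rw [hnum]
    have hden : 1 - q ≤ ((n:ℝ)+1) * (1 - q ^ (n+1)) := by
      have h2 := one_sub_q_le hq0 hq1 n
      have h3 : (1:ℝ) ≤ (n:ℝ)+1 := by have := Nat.cast_nonneg (α := ℝ) n; linarith
      nlinarith [one_sub_q_pow_pos hq0 hq1 n]
    calc q ^ y * (q ^ y) ^ n / (((n:ℝ)+1) * (1 - q ^ (n+1)))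
        ≤ q ^ y * (q ^ y) ^ n / (1 - q) :=
          div_le_div_of_nonneg_left (by positivity) h1q hden
      _ = q ^ y * (1-q)⁻¹ * (q ^ y) ^ n := by ring
  · exact (summable_geometric_of_lt_one (qrpow_pos hq0 y).le (qrpow_lt_one hq0 hq1 hy)).mul_left _

lemma logQ_hasSum (hq0 : 0 < q) (hq1 : q < 1) {y : ℝ} (hy : 0 < y) :
    HasSum (fun i : ℕ => Real.log (1 - q ^ (y + (i:ℝ)))) (-(Dq q y)) := by
  set a : ℕ × ℕ → ℝ := fun p => q ^ ((y + (p.1:ℝ)) * ((p.2:ℝ)+1)) / ((p.2:ℝ)+1) with ha_def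
  have ha_nonneg : ∀ p, 0 ≤ a p := fun p =>
    div_nonneg (qrpow_pos hq0 _).le (by positivity)
  have ha : Summable a := by
    apply Summable.of_nonneg_of_le
      (f := fun p : ℕ × ℕ => q ^ (p.1) * ((q ^ y * (q ^ y) ^ p.2))) ha_nonneg
    · rintro ⟨i, n⟩
      show q ^ ((y + (i:ℝ)) * ((n:ℝ)+1)) / ((n:ℝ)+1) ≤ q ^ (i:ℕ) * (q ^ y * (q ^ y) ^ n)
      have h1 : q ^ ((y + (i:ℝ)) * ((n:ℝ)+1)) ≤ q ^ ((i:ℝ) + (y + y * n)) := by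
        apply Real.rpow_le_rpow_of_exponent_ge hq0 hq1.le
        have hn : (0:ℝ) ≤ (n:ℝ) := n.cast_nonneg
        have hi : (0:ℝ) ≤ (i:ℝ) := i.cast_nonneg
        nlinarith
      have h2 : q ^ ((i:ℝ) + (y + y * n)) = q ^ (i:ℕ) * (q ^ y * (q ^ y) ^ n) := by
        rw [Real.rpow_add hq0, Real.rpow_add hq0, ← Real.rpow_natCast q i,
          ← Real.rpow_natCast (q ^ y) n, ← Real.rpow_mul hq0.le]
      calc q ^ ((y + (i:ℝ)) * ((n:ℝ)+1)) / ((n:ℝ)+1) ≤ q ^ ((y + (i:ℝ)) * ((n:ℝ)+1)) := by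
            apply div_le_self (qrpow_pos hq0 _).le
            have : (0:ℝ) ≤ (n:ℝ) := n.cast_nonneg; linarith
        _ ≤ q ^ ((i:ℝ) + (y + y * n)) := h1
        _ = _ := h2
    · exact (summable_geometric_of_lt_one hq0.le hq1).mul_of_nonneg
        ((summable_geometric_of_lt_one (qrpow_pos hq0 y).le (qrpow_lt_one hq0 hq1 hy)).mul_left _)
        (fun i => by positivity) (fun n => by positivity)
  have hfiber : ∀ i : ℕ, HasSum (fun n => a (i, n)) (-Real.log (1 - q ^ (y + (i:ℝ)))) := by
    intro i
    have hyi : 0 < y + (i:ℝ) := by have : (0:ℝ) ≤ (i:ℝ) := i.cast_nonneg; linarith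
    show HasSum (fun n : ℕ => q ^ ((y + (i:ℝ)) * ((n:ℝ)+1)) / ((n:ℝ)+1)) _
    exact hasSum_log_qpow hq0 hq1 hyi
  have hmain : HasSum (fun i : ℕ => -Real.log (1 - q ^ (y + (i:ℝ)))) (∑' p, a p) :=
    ha.hasSum.prod_fiberwise hfiber
  have hT : ∑' p, a p = Dq q y := by
    have hswap : Summable (fun p : ℕ × ℕ => a p.swap) := ha.prod_symm
    have h1 : ∑' p : ℕ × ℕ, a p = ∑' p : ℕ × ℕ, a p.swap :=
      ((Equiv.prodComm ℕ ℕ).tsum_eq a).symm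
    rw [h1, Summable.tsum_prod' hswap (fun n => hswap.prod_factor n)]
    apply tsum_congr
    intro n
    have hgeo : HasSum (fun i : ℕ => (q ^ (y * ((n:ℝ)+1)) / ((n:ℝ)+1)) * (q ^ (n+1)) ^ i)
        ((q ^ (y * ((n:ℝ)+1)) / ((n:ℝ)+1)) * (1 - q ^ (n+1))⁻¹) := by
      refine (hasSum_geometric_of_lt_one (by positivity) ?_).mul_left _
      exact pow_lt_one₀ hq0.le hq1 (Nat.succ_ne_zero n)
    have hterm : ∀ i : ℕ, a (i, n) = (q ^ (y * ((n:ℝ)+1)) / ((n:ℝ)+1)) * (q ^ (n+1)) ^ i := by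
      intro i
      show q ^ ((y + (i:ℝ)) * ((n:ℝ)+1)) / ((n:ℝ)+1) = _
      have h3 : q ^ (((n:ℝ)+1) * (i:ℝ)) = (q ^ (n+1)) ^ i := by
        rw [← pow_mul, ← Real.rpow_natCast q ((n+1)*i)]
        congr 1; push_cast; ring
      rw [show (y + (i:ℝ)) * ((n:ℝ)+1) = y * ((n:ℝ)+1) + ((n:ℝ)+1) * i by ring,
        Real.rpow_add hq0, h3]
      ring
    rw [show (fun i => a ((n, i).swap)) = fun i => a (i, n) from rfl]
    rw [tsum_congr hterm, hgeo.tsum_eq]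
    have hpos := one_sub_q_pow_pos hq0 hq1 n
    field_simp
  rw [hT] at hmain
  simpa using hmain.neg

lemma hasProd_of_hasSum_log {f : ℕ → ℝ} (hf : ∀ i, 0 < f i) {S : ℝ}
    (h : HasSum (fun i => Real.log (f i)) S) : HasProd f (Real.exp S) := by
  have ht : Tendsto (fun s : Finset ℕ => Real.exp (∑ i ∈ s, Real.log (f i))) atTop
      (nhds (Real.exp S)) := (Real.continuous_exp.tendsto S).comp h
  refine ht.congr fun s => ?_
  rw [Real.exp_sum]
  exact Finset.prod_congr rfl fun i _ => Real.exp_log (hf i)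

lemma tprod_Q (hq0 : 0 < q) (hq1 : q < 1) {y : ℝ} (hy : 0 < y) :
    ∏' i : ℕ, (1 - q ^ (y + (i:ℝ))) = Real.exp (-(Dq q y)) := by
  have hf : ∀ i : ℕ, 0 < 1 - q ^ (y + (i:ℝ)) := by
    intro i
    have hyi : 0 < y + (i:ℝ) := by have : (0:ℝ) ≤ (i:ℝ) := i.cast_nonneg; linarith
    have := qrpow_lt_one hq0 hq1 hyi
    linarith
  exact (_root_.hasProd_of_hasSum_log hf (logQ_hasSum hq0 hq1 hy)).tprod_eq

lemma tprod_P (hq0 : 0 < q) (hq1 : q < 1) :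
    ∏' i : ℕ, (1 - q ^ (i + 1)) = Real.exp (-(Dq q 1)) := by
  rw [← tprod_Q hq0 hq1 one_pos]
  apply tprod_congr
  intro i
  congr 1
  rw [← Real.rpow_natCast q (i+1)]
  congr 1
  push_cast; ring

lemma log_qGamma (hq0 : 0 < q) (hq1 : q < 1) {x : ℝ} (hx : 0 < x) :
    Real.log (qGamma q (x+1)) = Dq q (x+1) - Dq q 1 - x * Real.log (1-q) := by
  have h1q : 0 < 1 - q := by linarith
  rw [qGamma, tprod_P hq0 hq1, tprod_Q hq0 hq1 (by linarith : (0:ℝ) < x + 1)]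
  rw [← Real.exp_sub]
  rw [show (1 - (x+1)) = -x by ring]
  rw [Real.log_mul (Real.exp_ne_zero _) (Real.rpow_pos_of_pos h1q _).ne',
    Real.log_exp, Real.log_rpow h1q]
  ring

lemma key_identity (hq0 : 0 < q) (hq1 : q < 1) {x : ℝ} (hx : 0 < x) :
    (1/x) * Real.log (qGamma q (x+1)) =
      -Real.log (1-q) + ∑' n : ℕ, cq q n * Eb (bq q n) x := by
  rw [log_qGamma hq0 hq1 hx]
  have h1 : Dq q (x+1) - Dq q 1 = x * ∑' n : ℕ, cq q n * Eb (bq q n) x := by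
    rw [Dq, Dq, ← Summable.tsum_sub (summable_D hq0 hq1 (by linarith : (0:ℝ) < x+1))
      (summable_D hq0 hq1 one_pos), ← tsum_mul_left]
    refine tsum_congr fun n => ?_
    have hexp : Real.exp (-(bq q n * x)) = q ^ (((n:ℝ)+1) * x) := by
      rw [Real.rpow_def_of_pos hq0]; congr 1; rw [bq]; ring
    rw [Eb, hexp, cq]
    have hsplit : q ^ ((x+1) * ((n:ℝ)+1)) = q ^ (((n:ℝ)+1) * x) * q ^ (n+1) := by
      rw [← Real.rpow_natCast q (n+1), ← Real.rpow_add hq0]; congr 1; push_cast; ring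
    have h1' : q ^ ((1:ℝ) * ((n:ℝ)+1)) = q ^ (n+1) := by
      rw [← Real.rpow_natCast q (n+1)]; congr 1; push_cast; ring
    rw [hsplit, h1']
    have hM : (((n:ℝ)+1) * (1 - q^(n+1))) ≠ 0 :=
      (mul_pos (by positivity) (one_sub_q_pow_pos hq0 hq1 n)).ne'
    field_simp
  rw [h1]
  field_simp
  ring

lemma bq_pos (hq0 : 0 < q) (hq1 : q < 1) (n : ℕ) : 0 < bq q n := by
  have := Real.log_neg hq0 hq1
  have h : (0:ℝ) < (n:ℝ)+1 := by positivity
  rw [bq]; nlinarith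

lemma cq_pos (hq0 : 0 < q) (hq1 : q < 1) (n : ℕ) : 0 < cq q n := by
  rw [cq]
  exact div_pos (pow_pos hq0 _) (mul_pos (by positivity) (one_sub_q_pow_pos hq0 hq1 n))

lemma Eb_abs_le {b x : ℝ} (hb : 0 < b) (hx : 0 < x) : |Eb b x| ≤ 1/x := by
  rw [Eb, abs_div, abs_of_pos hx]
  gcongr
  have he1 : Real.exp (-(b*x)) < 1 := Real.exp_lt_one_iff.2 (by nlinarith)
  have he0 : 0 < Real.exp (-(b*x)) := Real.exp_pos _
  rw [abs_le]; constructor <;> linarith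

lemma summable_cE (hq0 : 0 < q) (hq1 : q < 1) {x : ℝ} (hx : 0 < x) :
    Summable (fun n : ℕ => cq q n * Eb (bq q n) x) := by
  have h1q : 0 < 1 - q := by linarith
  apply Summable.of_norm_bounded (g := fun n : ℕ => q ^ n * ((1-q)⁻¹ * x⁻¹))
    ((summable_geometric_of_lt_one hq0.le hq1).mul_right _)
  intro n
  rw [norm_mul, Real.norm_eq_abs, Real.norm_eq_abs, abs_of_pos (cq_pos hq0 hq1 n)]
  have hE := Eb_abs_le (bq_pos hq0 hq1 n) hx
  have hc : cq q n ≤ q ^ n * (1-q)⁻¹ := by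
    rw [cq]
    have hden : 1 - q ≤ ((n:ℝ)+1) * (1 - q ^ (n+1)) := by
      have h2 := one_sub_q_le hq0 hq1 n
      have h3 : (1:ℝ) ≤ (n:ℝ)+1 := by have := Nat.cast_nonneg (α := ℝ) n; linarith
      nlinarith [one_sub_q_pow_pos hq0 hq1 n]
    calc q ^ (n+1) / (((n:ℝ)+1) * (1 - q ^ (n+1))) ≤ q ^ (n+1) / (1-q) :=
          div_le_div_of_nonneg_left (by positivity) h1q hden
      _ ≤ q ^ n / (1-q) := by
          have hq' : q ^ (n+1) ≤ q ^ n := by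
            calc q ^ (n+1) = q ^ n * q := pow_succ q n
              _ ≤ q ^ n * 1 := by nlinarith [pow_pos hq0 n]
              _ = q ^ n := mul_one _
          calc q ^ (n+1) / (1-q) = q ^ (n+1) * (1-q)⁻¹ := div_eq_mul_inv _ _
            _ ≤ q ^ n * (1-q)⁻¹ := mul_le_mul_of_nonneg_right hq' (by positivity)
            _ = q ^ n / (1-q) := (div_eq_mul_inv _ _).symm
  calc cq q n * |Eb (bq q n) x| ≤ (q ^ n * (1-q)⁻¹) * (1/x) := by
        apply mul_le_mul hc hE (abs_nonneg _) (by positivity)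
    _ = q ^ n * ((1-q)⁻¹ * x⁻¹) := by ring

end Aux

/-- x ↦ (Γ_q(x+1))^{1/x} is strictly log-concave and strictly increasing
on (0,∞), i.e. x ↦ (1/x) log Γ_q(x+1) is strictly concave and strictly increasing there. -/
theorem qGamma_root_strictConcave_strictMono (q : ℝ) (hq0 : 0 < q) (hq1 : q < 1) :
    StrictConcaveOn ℝ (Set.Ioi 0) (fun x => (1 / x) * Real.log (qGamma q (x + 1))) ∧
    StrictMonoOn (fun x => (1 / x) * Real.log (qGamma q (x + 1))) (Set.Ioi 0) := by
  constructor
  · refine ⟨convex_Ioi 0, ?_⟩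
    intro x hx y hy hxy a b ha hb hab
    have hx0 : (0:ℝ) < x := hx
    have hy0 : (0:ℝ) < y := hy
    have hz0 : (0:ℝ) < a*x + b*y := by nlinarith
    simp only [smul_eq_mul]
    rw [key_identity hq0 hq1 hx0, key_identity hq0 hq1 hy0, key_identity hq0 hq1 hz0]
    have hterm : ∀ n : ℕ, a * (cq q n * Eb (bq q n) x) + b * (cq q n * Eb (bq q n) y)
        < cq q n * Eb (bq q n) (a*x+b*y) := by
      intro n
      have hstrict := (Eb_strictConcaveOn (bq_pos hq0 hq1 n)).2 hx hy hxy ha hb hab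
      simp only [smul_eq_mul] at hstrict
      have hc := cq_pos hq0 hq1 n
      nlinarith
    have hsumL : Summable (fun n : ℕ => a * (cq q n * Eb (bq q n) x)
        + b * (cq q n * Eb (bq q n) y)) :=
      ((summable_cE hq0 hq1 hx0).mul_left a).add ((summable_cE hq0 hq1 hy0).mul_left b)
    have hsum : a * (∑' n : ℕ, cq q n * Eb (bq q n) x)
        + b * (∑' n : ℕ, cq q n * Eb (bq q n) y)
        < ∑' n : ℕ, cq q n * Eb (bq q n) (a*x+b*y) := by
      rw [← tsum_mul_left, ← tsum_mul_left,
        ← Summable.tsum_add ((summable_cE hq0 hq1 hx0).mul_left a) ((summable_cE hq0 hq1 hy0).mul_left b)]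
      exact Summable.tsum_lt_tsum (i := 0) (fun n => (hterm n).le) (hterm 0) hsumL
        (summable_cE hq0 hq1 hz0)
    have expand : ∀ u v : ℝ, a * (-Real.log (1-q) + u) + b * (-Real.log (1-q) + v)
        = -Real.log (1-q) + (a*u + b*v) := by
      intro u v; linear_combination (-Real.log (1-q)) * hab
    rw [expand]
    exact add_lt_add_right hsum _
  · intro x hx y hy hxy
    have hx0 : (0:ℝ) < x := hx
    have hy0 : (0:ℝ) < y := hy
    simp only
    rw [key_identity hq0 hq1 hx0, key_identity hq0 hq1 hy0]
    apply add_lt_add_right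
    have hterm : ∀ n : ℕ, cq q n * Eb (bq q n) x < cq q n * Eb (bq q n) y := fun n =>
      mul_lt_mul_of_pos_left ((Eb_strictMonoOn (bq_pos hq0 hq1 n)) hx hy hxy)
        (cq_pos hq0 hq1 n)
    exact Summable.tsum_lt_tsum (i := 0) (fun n => (hterm n).le) (hterm 0)
      (summable_cE hq0 hq1 hx0) (summable_cE hq0 hq1 hy0)
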